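/- Let p_i = Σ_{ℓ=1}^{n} [ (Σ_{j ≥ ⌈ηℓ⌉} C(i,j)·C(n-i, ℓ-j)) / C(n,ℓ) ] · C(n,ℓ) · (1/m)^ℓ · (1 - 1/m)^{n-ℓ}, the probability that a broker is red-majority when each of n mobile nodes (i of them red) independently connects to the broker with probability 1/m and the broker is red-majority iff at least η fraction of its connected nodes are red. Then p_i is monotonically non-decreasing in i (for fixed n, m, η with 1/2 < η ≤ 1). -/

import Mathlib

open Finset

lemma broker_step_nat (i a k ℓ : ℕ) (hk : 1 ≤ k) :
    ∑ j ∈ Icc k ℓ, Nat.choose i j * Nat.choose (a+1) (ℓ-j)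
      ≤ ∑ j ∈ Icc k ℓ, Nat.choose (i+1) j * Nat.choose a (ℓ-j) := by
  rcases lt_or_ge ℓ k with hkl | hkl
  · simp [Finset.Icc_eq_empty_of_lt hkl]
  · have hℓ : 1 ≤ ℓ := le_trans hk hkl
    have hIcc : Icc k ℓ = Finset.Ico k (ℓ+1) := by rw [Finset.Ico_add_one_right_eq_Icc]
    -- rewrite LHS
    have eL : ∑ j ∈ Icc k ℓ, Nat.choose i j * Nat.choose (a+1) (ℓ-j)
        = (∑ j ∈ Ico k ℓ, Nat.choose i j * Nat.choose a (ℓ-j))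
          + (∑ j ∈ Ico k ℓ, Nat.choose i j * Nat.choose a (ℓ-j-1))
          + Nat.choose i ℓ * Nat.choose a 0 := by
      rw [hIcc, Finset.sum_Ico_succ_top hkl]
      have : ∀ j ∈ Ico k ℓ, Nat.choose i j * Nat.choose (a+1) (ℓ-j)
          = Nat.choose i j * Nat.choose a (ℓ-j) + Nat.choose i j * Nat.choose a (ℓ-j-1) := by
        intro j hj
        have hjℓ : j < ℓ := (Finset.mem_Ico.mp hj).2
        obtain ⟨t, ht⟩ : ∃ t, ℓ - j = t + 1 := ⟨ℓ - j - 1, by omega⟩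
        have ht2 : ℓ - j - 1 = t := by omega
        rw [ht, Nat.choose_succ_succ]
        simp only [Nat.add_sub_cancel, Nat.succ_eq_add_one]
        ring
      rw [Finset.sum_congr rfl this, Finset.sum_add_distrib]
      simp
    have eR : ∑ j ∈ Icc k ℓ, Nat.choose (i+1) j * Nat.choose a (ℓ-j)
        = (∑ j ∈ Ico k ℓ, Nat.choose i j * Nat.choose a (ℓ-j))
          + (∑ j ∈ Icc k ℓ, Nat.choose i (j-1) * Nat.choose a (ℓ-j))
          + Nat.choose i ℓ * Nat.choose a 0 := by
      have : ∀ j ∈ Icc k ℓ, Nat.choose (i+1) j * Nat.choose a (ℓ-j)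
          = Nat.choose i j * Nat.choose a (ℓ-j) + Nat.choose i (j-1) * Nat.choose a (ℓ-j) := by
        intro j hj
        have hj1 : 1 ≤ j := le_trans hk (Finset.mem_Icc.mp hj).1
        obtain ⟨t, ht⟩ : ∃ t, j = t + 1 := ⟨j - 1, by omega⟩
        have ht2 : j - 1 = t := by omega
        rw [ht2, ht, Nat.choose_succ_succ]
        simp only [Nat.succ_eq_add_one]
        ring
      rw [Finset.sum_congr rfl this, Finset.sum_add_distrib]
      have : ∑ j ∈ Icc k ℓ, Nat.choose i j * Nat.choose a (ℓ-j)
          = (∑ j ∈ Ico k ℓ, Nat.choose i j * Nat.choose a (ℓ-j)) + Nat.choose i ℓ * Nat.choose a 0 := by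
        rw [hIcc, Finset.sum_Ico_succ_top hkl]
        simp
      rw [this]; ring
    rw [eL, eR]
    have key : ∑ j ∈ Ico k ℓ, Nat.choose i j * Nat.choose a (ℓ-j-1)
        ≤ ∑ j ∈ Icc k ℓ, Nat.choose i (j-1) * Nat.choose a (ℓ-j) := by
      have emap : ∑ j ∈ Icc k ℓ, Nat.choose i (j-1) * Nat.choose a (ℓ-j)
          = ∑ j ∈ Icc (k-1) (ℓ-1), Nat.choose i j * Nat.choose a (ℓ-j-1) := by
        rw [← Finset.Ico_add_one_right_eq_Icc, ← Finset.Ico_add_one_right_eq_Icc]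
        rw [Finset.sum_Ico_eq_sum_range, Finset.sum_Ico_eq_sum_range]
        apply Finset.sum_congr
        · congr 1 <;> omega
        · intro j hj
          simp only [Finset.mem_range] at hj
          congr 2 <;> omega
      rw [emap]
      apply Finset.sum_le_sum_of_subset
      intro j hj
      simp only [Finset.mem_Ico, Finset.mem_Icc] at *
      omega
    omega


lemma broker_S_step (n i : ℕ) (hin : i < n) (η : ℝ) (hη : 1 / 2 < η) (ℓ : ℕ) (hℓ : 1 ≤ ℓ) :
    ∑ j ∈ Icc ⌈η * ℓ⌉₊ ℓ, Nat.choose i j * Nat.choose (n - i) (ℓ - j)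
      ≤ ∑ j ∈ Icc ⌈η * ℓ⌉₊ ℓ, Nat.choose (i+1) j * Nat.choose (n - (i+1)) (ℓ - j) := by
  have hk : 1 ≤ ⌈η * ℓ⌉₊ := by
    rw [Nat.one_le_ceil_iff]
    have hℓ' : (1 : ℝ) ≤ (ℓ : ℝ) := by exact_mod_cast hℓ
    nlinarith
  have ha : n - i = (n - (i+1)) + 1 := by omega
  rw [ha]
  exact broker_step_nat i (n - (i+1)) _ ℓ hk

/-- The probability `p_i` that a broker is red-majority (each of `n` nodes, `i` red,
connecting independently with probability `1/m`, red-majority meaning at least an `η`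
fraction of connected nodes are red) is non-decreasing in `i`. -/
theorem broker_red_probability_monotone (n m : ℕ) (hm : 1 ≤ m) (η : ℝ)
    (hη : 1 / 2 < η) (hη1 : η ≤ 1) (p : ℕ → ℝ)
    (hp : ∀ i, p i = ∑ ℓ ∈ Finset.Icc 1 n,
      ((∑ j ∈ Finset.Icc ⌈η * ℓ⌉₊ ℓ,
          (Nat.choose i j : ℝ) * (Nat.choose (n - i) (ℓ - j))) / (Nat.choose n ℓ)) *
        ((Nat.choose n ℓ : ℝ) * (1 / m) ^ ℓ * (1 - 1 / m) ^ (n - ℓ))) :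
    ∀ i i' : ℕ, i ≤ i' → i' ≤ n → p i ≤ p i' := by
  have hm' : (1 : ℝ) ≤ (m : ℝ) := by exact_mod_cast hm
  have hw : ∀ ℓ : ℕ, (0 : ℝ) ≤ (1 / m) ^ ℓ * (1 - 1 / m) ^ (n - ℓ) := by
    intro ℓ
    apply mul_nonneg
    · positivity
    · apply pow_nonneg
      rw [sub_nonneg]
      exact div_le_one_of_le₀ hm' (by positivity)
  have hstep : ∀ i, i < n → p i ≤ p (i + 1) := by
    intro i hin
    rw [hp, hp]
    apply Finset.sum_le_sum
    intro ℓ hℓ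
    rw [Finset.mem_Icc] at hℓ
    have hC : (0 : ℝ) < (Nat.choose n ℓ : ℝ) := by
      exact_mod_cast Nat.choose_pos hℓ.2
    have hterm : ∀ X : ℝ, X / (Nat.choose n ℓ : ℝ) *
        ((Nat.choose n ℓ : ℝ) * (1 / m) ^ ℓ * (1 - 1 / m) ^ (n - ℓ))
        = X * ((1 / m) ^ ℓ * (1 - 1 / m) ^ (n - ℓ)) := by
      intro X
      field_simp
    rw [hterm, hterm]
    apply mul_le_mul_of_nonneg_right _ (hw ℓ)
    have := broker_S_step n i hin η hη ℓ hℓ.1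
    exact_mod_cast this
  intro i i' h hn
  induction h with
  | refl => exact le_refl _
  | @step j hj ih =>
      exact le_trans (ih (by omega)) (hstep j (by omega))
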